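/- Let Γ be a simple graph of order n and let μ be the algebraic connectivity of Γ (the second smallest eigenvalue of the Laplacian matrix of Γ). Then every strong defensive alliance S in Γ satisfies |S| ≥ ⌈n(μ+1)/(n+μ)⌉; in particular the strong defensive alliance number satisfies â(Γ) ≥ ⌈n(μ+1)/(n+μ)⌉. -/

import Mathlib

open Finset SimpleGraph

/-- `μ` is the second smallest (counted with multiplicity) value of the family `e`. -/
def IsSecondSmallest {ι : Type*} (e : ι → ℝ) (μ : ℝ) : Prop :=
  ∃ i₀ i₁ : ι, i₀ ≠ i₁ ∧ e i₀ ≤ μ ∧ e i₁ = μ ∧ ∀ j : ι, j ≠ i₀ → μ ≤ e j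

/-- `lam` is the largest value of the family `e`. -/
def IsLargest {ι : Type*} (e : ι → ℝ) (lam : ℝ) : Prop :=
  (∃ i : ι, e i = lam) ∧ ∀ i : ι, e i ≤ lam

open Matrix in
/-- Rayleigh-type lower bound for a symmetric matrix whose eigenvalues (except possibly one)
are at least `mu`, applied to a vector orthogonal to the all-ones kernel vector. -/
lemma spectral_key {V : Type*} [Fintype V] [DecidableEq V]
    (L : Matrix V V ℝ) (hL : L.IsHermitian)
    (hker : L *ᵥ (fun _ : V => (1:ℝ)) = 0)
    (mu : ℝ) (hmu_pos : 0 < mu) (i₀ : V)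
    (hge : ∀ j, j ≠ i₀ → mu ≤ hL.eigenvalues j)
    (x : V → ℝ) (hx : ∑ v, x v = 0) :
    mu * (∑ v, x v ^ 2) ≤ x ⬝ᵥ (L *ᵥ x) := by
  classical
  set b := hL.eigenvectorBasis with hb
  set e := hL.eigenvalues with he
  set toE : (V → ℝ) → EuclideanSpace ℝ V := fun w => (WithLp.equiv 2 (V → ℝ)).symm w with htoE
  -- inner products as dot products
  have hIP : ∀ a w : V → ℝ, (inner ℝ (toE a) (toE w) : ℝ) = a ⬝ᵥ w := by
    intro a w
    rw [EuclideanSpace.inner_eq_star_dotProduct]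
    simp [htoE, dotProduct_comm]
  have hIPb : ∀ (j : V) (w : V → ℝ), (inner ℝ (b j) (toE w) : ℝ) = (⇑(b j)) ⬝ᵥ w := by
    intro j w
    rw [EuclideanSpace.inner_eq_star_dotProduct]
    simp [htoE, dotProduct_comm]
  have hIPb' : ∀ (j : V) (w : V → ℝ), (inner ℝ (toE w) (b j) : ℝ) = (⇑(b j)) ⬝ᵥ w := by
    intro j w
    rw [real_inner_comm]
    exact hIPb j w
  -- self-adjointness
  have hsa : ∀ a w : V → ℝ, (L *ᵥ a) ⬝ᵥ w = a ⬝ᵥ (L *ᵥ w) := by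
    intro a w
    rw [Matrix.dotProduct_mulVec, ← Matrix.mulVec_transpose]
    congr 1
    rw [← Matrix.conjTranspose_eq_transpose_of_trivial, hL.eq]
  -- eigen-relation on inner products
  have heig : ∀ (j : V) (w : V → ℝ), (⇑(b j)) ⬝ᵥ (L *ᵥ w) = e j * ((⇑(b j)) ⬝ᵥ w) := by
    intro j w
    rw [← hsa, hL.mulVec_eigenvectorBasis, smul_dotProduct]
    simp [he, hb]
  -- coefficients
  set c : V → ℝ := fun j => (⇑(b j)) ⬝ᵥ x with hc
  set d : V → ℝ := fun j => (⇑(b j)) ⬝ᵥ (fun _ : V => (1:ℝ)) with hd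
  have hd0 : ∀ j, j ≠ i₀ → d j = 0 := by
    intro j hj
    have h1 : (⇑(b j)) ⬝ᵥ (L *ᵥ (fun _ : V => (1:ℝ))) = e j * d j := heig j _
    rw [hker] at h1
    simp only [dotProduct_zero] at h1
    have : 0 < e j := lt_of_lt_of_le hmu_pos (hge j hj)
    have := h1.symm
    rcases mul_eq_zero.mp this with h | h
    · exact absurd h (ne_of_gt ‹0 < e j›)
    · exact h
  -- d i₀ ≠ 0
  have hcard : (0:ℝ) < Fintype.card V := by
    have : Nonempty V := ⟨i₀⟩
    exact_mod_cast Fintype.card_pos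
  have hdi₀ : d i₀ ≠ 0 := by
    intro h0
    have h1 : (inner ℝ (toE (fun _ : V => (1:ℝ))) (toE (fun _ : V => (1:ℝ))) : ℝ)
        = ∑ j, (inner ℝ (toE (fun _ : V => (1:ℝ))) (b j) : ℝ) * (inner ℝ (b j) (toE (fun _ : V => (1:ℝ))) : ℝ) :=
      (b.sum_inner_mul_inner _ _).symm
    rw [hIP] at h1
    have h2 : (fun _ : V => (1:ℝ)) ⬝ᵥ (fun _ : V => (1:ℝ)) = (Fintype.card V : ℝ) := by
      simp [dotProduct]
    rw [h2] at h1
    have h3 : ∀ j, (inner ℝ (toE (fun _ : V => (1:ℝ))) (b j) : ℝ) * (inner ℝ (b j) (toE (fun _ : V => (1:ℝ))) : ℝ) = d j * d j := by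
      intro j; rw [hIPb, hIPb']
    rw [Finset.sum_congr rfl (fun j _ => h3 j)] at h1
    have h4 : ∑ j, d j * d j = 0 := by
      apply Finset.sum_eq_zero
      intro j _
      by_cases hj : j = i₀
      · rw [hj, h0, mul_zero]
      · rw [hd0 j hj, mul_zero]
    rw [h4] at h1
    exact absurd h1 (ne_of_gt hcard)
  -- c i₀ = 0
  have hci₀ : c i₀ = 0 := by
    have h1 : (inner ℝ (toE (fun _ : V => (1:ℝ))) (toE x) : ℝ)
        = ∑ j, (inner ℝ (toE (fun _ : V => (1:ℝ))) (b j) : ℝ) * (inner ℝ (b j) (toE x) : ℝ) :=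
      (b.sum_inner_mul_inner _ _).symm
    rw [hIP] at h1
    have h2 : (fun _ : V => (1:ℝ)) ⬝ᵥ x = 0 := by
      simpa [dotProduct] using hx
    rw [h2] at h1
    have h3 : ∀ j, (inner ℝ (toE (fun _ : V => (1:ℝ))) (b j) : ℝ) * (inner ℝ (b j) (toE x) : ℝ) = d j * c j := by
      intro j; rw [hIPb, hIPb']
    rw [Finset.sum_congr rfl (fun j _ => h3 j)] at h1
    have h4 : ∑ j, d j * c j = d i₀ * c i₀ := by
      apply Finset.sum_eq_single i₀
      · intro j _ hj; rw [hd0 j hj, zero_mul]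
      · intro h; exact absurd (Finset.mem_univ i₀) h
    rw [h4] at h1
    rcases mul_eq_zero.mp h1.symm with h | h
    · exact absurd h hdi₀
    · exact h
  -- quadratic form expansion
  have hQ : x ⬝ᵥ (L *ᵥ x) = ∑ j, e j * c j ^ 2 := by
    have h1 : (inner ℝ (toE x) (toE (L *ᵥ x)) : ℝ)
        = ∑ j, (inner ℝ (toE x) (b j) : ℝ) * (inner ℝ (b j) (toE (L *ᵥ x)) : ℝ) :=
      (b.sum_inner_mul_inner _ _).symm
    rw [hIP] at h1
    rw [h1]
    apply Finset.sum_congr rfl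
    intro j _
    rw [hIPb, hIPb', heig]
    ring
  -- norm expansion
  have hN : ∑ v, x v ^ 2 = ∑ j, c j ^ 2 := by
    have h1 : (inner ℝ (toE x) (toE x) : ℝ)
        = ∑ j, (inner ℝ (toE x) (b j) : ℝ) * (inner ℝ (b j) (toE x) : ℝ) :=
      (b.sum_inner_mul_inner _ _).symm
    rw [hIP] at h1
    have h2 : x ⬝ᵥ x = ∑ v, x v ^ 2 := by
      simp [dotProduct, sq]
    rw [h2] at h1
    rw [h1]
    apply Finset.sum_congr rfl
    intro j _
    rw [hIPb, hIPb']
    ring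
  rw [hQ, hN, Finset.mul_sum]
  apply Finset.sum_le_sum
  intro j _
  by_cases hj : j = i₀
  · rw [hj, hci₀]; simp
  · exact mul_le_mul_of_nonneg_right (hge j hj) (sq_nonneg _)

open Matrix in
theorem stmt_1 {V : Type*} [Fintype V] [DecidableEq V]
    (G : SimpleGraph V) [DecidableRel G.Adj]
    (n : ℕ) (hn : Fintype.card V = n)
    (mu : ℝ)
    (hmu : ∃ hL : (G.lapMatrix ℝ).IsHermitian, IsSecondSmallest hL.eigenvalues mu)
    (S : Finset V) (hS : S.Nonempty)
    (hdef : ∀ v ∈ S, (G.neighborFinset v \ S).card ≤ (G.neighborFinset v ∩ S).card)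
    :
    ⌈(n : ℝ) * (mu + 1) / ((n : ℝ) + mu)⌉ ≤ (S.card : ℤ) := by
  classical
  obtain ⟨hL, i₀, i₁, hne, hle, heq, hge⟩ := hmu
  set s := S.card with hs
  -- basic facts
  have hsn : s ≤ n := hn ▸ S.card_le_univ
  have hs1 : 1 ≤ s := Finset.card_pos.mpr hS
  have hn1 : 1 ≤ n := le_trans hs1 hsn
  -- mu ≥ 0
  have hmu0 : 0 ≤ mu := by
    have := (SimpleGraph.posSemidef_lapMatrix ℝ G).eigenvalues_nonneg i₁
    rw [← heq]
    exact this
  -- the test vector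
  set x : V → ℝ := fun v => if v ∈ S then (n : ℝ) - s else -(s : ℝ) with hx
  have hsumS : ∀ f : V → ℝ, ∑ v, f v = ∑ v ∈ S, f v + ∑ v ∈ Sᶜ, f v :=
    fun f => (Finset.sum_add_sum_compl S f).symm
  have hcardSc : (Sᶜ.card : ℝ) = (n : ℝ) - s := by
    rw [Finset.card_compl, hn]
    rw [Nat.cast_sub (by omega : S.card ≤ n), ← hs]
  have hxsum : ∑ v, x v = 0 := by
    rw [hsumS]
    have h1 : ∑ v ∈ S, x v = s * ((n:ℝ) - s) := by
      calc ∑ v ∈ S, x v = ∑ _v ∈ S, ((n:ℝ) - s) :=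
            Finset.sum_congr rfl (fun v hv => by simp [hx, hv])
        _ = s * ((n:ℝ) - s) := by rw [Finset.sum_const, nsmul_eq_mul]
    have h2 : ∑ v ∈ Sᶜ, x v = ((n:ℝ) - s) * (-(s:ℝ)) := by
      calc ∑ v ∈ Sᶜ, x v = ∑ _v ∈ Sᶜ, (-(s:ℝ)) :=
            Finset.sum_congr rfl (fun v hv => by
              simp only [Finset.mem_compl] at hv
              simp [hx, hv])
        _ = ((n:ℝ) - s) * (-(s:ℝ)) := by rw [Finset.sum_const, nsmul_eq_mul, hcardSc]
    rw [h1, h2]; ring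
  have hxsq : ∑ v, x v ^ 2 = s * ((n:ℝ) - s) * n := by
    rw [hsumS]
    have h1 : ∑ v ∈ S, x v ^ 2 = s * ((n:ℝ) - s)^2 := by
      calc ∑ v ∈ S, x v ^ 2 = ∑ _v ∈ S, ((n:ℝ) - s)^2 :=
            Finset.sum_congr rfl (fun v hv => by simp [hx, hv])
        _ = s * ((n:ℝ) - s)^2 := by rw [Finset.sum_const, nsmul_eq_mul]
    have h2 : ∑ v ∈ Sᶜ, x v ^ 2 = ((n:ℝ) - s) * (s:ℝ)^2 := by
      calc ∑ v ∈ Sᶜ, x v ^ 2 = ∑ _v ∈ Sᶜ, ((s:ℝ))^2 :=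
            Finset.sum_congr rfl (fun v hv => by
              simp only [Finset.mem_compl] at hv
              simp [hx, hv])
        _ = ((n:ℝ) - s) * (s:ℝ)^2 := by rw [Finset.sum_const, nsmul_eq_mul, hcardSc]
    rw [h1, h2]; ring
  -- quadratic form bound via edges
  set L := G.lapMatrix ℝ with hLdef
  have hQform : x ⬝ᵥ (L *ᵥ x) =
      (∑ i : V, ∑ j : V, if G.Adj i j then (x i - x j)^2 else 0) / 2 := by
    rw [← Matrix.toLinearMap₂'_apply', SimpleGraph.lapMatrix_toLinearMap₂']
  -- split the double sum
  have hcross : ∀ i ∈ S, ∀ j ∈ Sᶜ, (if G.Adj i j then (x i - x j)^2 else 0)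
      = if G.Adj i j then ((n:ℝ))^2 else 0 := by
    intro i hi j hj
    simp only [Finset.mem_compl] at hj
    by_cases h : G.Adj i j
    · simp only [h, if_true, hx, hi, hj, if_true, if_neg hj]
      ring
    · simp [h]
  have hsame : ∀ (i j : V), ((i ∈ S ∧ j ∈ S) ∨ (i ∉ S ∧ j ∉ S)) →
      (if G.Adj i j then (x i - x j)^2 else 0) = 0 := by
    intro i j hij
    rcases hij with ⟨hi, hj⟩ | ⟨hi, hj⟩ <;>
      · by_cases h : G.Adj i j <;> simp [h, hx, hi, hj]
  -- the double sum equals twice the crossing sum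
  have hsplit : (∑ i : V, ∑ j : V, if G.Adj i j then (x i - x j)^2 else 0)
      = 2 * ∑ i ∈ S, ∑ j ∈ Sᶜ, (if G.Adj i j then ((n:ℝ))^2 else 0) := by
    have hsym : ∀ i j : V, (if G.Adj i j then (x i - x j)^2 else 0)
        = (if G.Adj j i then (x j - x i)^2 else 0) := by
      intro i j
      by_cases h : G.Adj i j
      · have h' : G.Adj j i := h.symm
        simp only [h, h', if_true]
        ring
      · have h' : ¬ G.Adj j i := fun hh => h hh.symm
        simp [h, h']
    calc (∑ i : V, ∑ j : V, if G.Adj i j then (x i - x j)^2 else 0)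
        = ∑ i ∈ S, (∑ j : V, if G.Adj i j then (x i - x j)^2 else 0)
          + ∑ i ∈ Sᶜ, (∑ j : V, if G.Adj i j then (x i - x j)^2 else 0) := hsumS _
      _ = ∑ i ∈ S, ∑ j ∈ Sᶜ, (if G.Adj i j then (x i - x j)^2 else 0)
          + ∑ i ∈ Sᶜ, ∑ j ∈ S, (if G.Adj i j then (x i - x j)^2 else 0) := by
          congr 1
          · apply Finset.sum_congr rfl
            intro i hi
            exact (Finset.sum_subset (Finset.subset_univ Sᶜ)
              (fun j _ hj => hsame i j (Or.inl ⟨hi, by simpa using hj⟩))).symm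
          · apply Finset.sum_congr rfl
            intro i hi
            simp only [Finset.mem_compl] at hi
            exact (Finset.sum_subset (Finset.subset_univ S)
              (fun j _ hj => hsame i j (Or.inr ⟨hi, hj⟩))).symm
      _ = 2 * ∑ i ∈ S, ∑ j ∈ Sᶜ, (if G.Adj i j then (x i - x j)^2 else 0) := by
          have h5 : ∑ i ∈ Sᶜ, ∑ j ∈ S, (if G.Adj i j then (x i - x j)^2 else 0)
              = ∑ i ∈ S, ∑ j ∈ Sᶜ, (if G.Adj i j then (x i - x j)^2 else 0) := by
            rw [Finset.sum_comm]
            exact Finset.sum_congr rfl fun a _ => Finset.sum_congr rfl fun b _ => hsym b a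
          rw [h5]; ring
      _ = 2 * ∑ i ∈ S, ∑ j ∈ Sᶜ, (if G.Adj i j then ((n:ℝ))^2 else 0) := by
          congr 1
          exact Finset.sum_congr rfl (fun i hi => Finset.sum_congr rfl (fun j hj => hcross i hi j hj))
  -- crossing sum counted via neighborFinsets
  have hcount : ∀ i : V, ∑ j ∈ Sᶜ, (if G.Adj i j then ((n:ℝ))^2 else 0)
      = ((G.neighborFinset i \ S).card : ℝ) * (n:ℝ)^2 := by
    intro i
    have hfil : Sᶜ.filter (G.Adj i) = G.neighborFinset i \ S := by
      ext j
      simp [SimpleGraph.mem_neighborFinset, and_comm]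
    rw [← Finset.sum_filter, hfil, Finset.sum_const, nsmul_eq_mul]
  have hCbound : ∀ i ∈ S, ((G.neighborFinset i \ S).card : ℝ) ≤ (s:ℝ) - 1 := by
    intro i hi
    have h1 : (G.neighborFinset i \ S).card ≤ (G.neighborFinset i ∩ S).card := hdef i hi
    have h2 : (G.neighborFinset i ∩ S) ⊆ S.erase i := by
      intro j hj
      simp only [Finset.mem_inter, SimpleGraph.mem_neighborFinset] at hj
      exact Finset.mem_erase.mpr ⟨fun h => G.loopless.irrefl i (h ▸ hj.1), hj.2⟩
    have h3 : (G.neighborFinset i ∩ S).card ≤ s - 1 := by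
      calc (G.neighborFinset i ∩ S).card ≤ (S.erase i).card := Finset.card_le_card h2
        _ = s - 1 := by rw [Finset.card_erase_of_mem hi]
    have : (G.neighborFinset i \ S).card ≤ s - 1 := le_trans h1 h3
    calc ((G.neighborFinset i \ S).card : ℝ) ≤ ((s - 1 : ℕ) : ℝ) := by exact_mod_cast this
      _ = (s:ℝ) - 1 := by push_cast [hs1]; ring
  -- final quadratic form bound
  have hQbound : x ⬝ᵥ (L *ᵥ x) ≤ (s:ℝ) * ((s:ℝ) - 1) * (n:ℝ)^2 := by
    rw [hQform, hsplit]
    rw [Finset.sum_congr rfl (fun i _ => hcount i)]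
    have h1 : ∑ i ∈ S, ((G.neighborFinset i \ S).card : ℝ) * (n:ℝ)^2
        ≤ ∑ i ∈ S, ((s:ℝ) - 1) * (n:ℝ)^2 := by
      apply Finset.sum_le_sum
      intro i hi
      exact mul_le_mul_of_nonneg_right (hCbound i hi) (by positivity)
    rw [Finset.sum_const, nsmul_eq_mul] at h1
    calc 2 * (∑ i ∈ S, ((G.neighborFinset i \ S).card : ℝ) * (n:ℝ)^2) / 2
        = ∑ i ∈ S, ((G.neighborFinset i \ S).card : ℝ) * (n:ℝ)^2 := by ring
      _ ≤ s * (((s:ℝ) - 1) * (n:ℝ)^2) := h1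
      _ = (s:ℝ) * ((s:ℝ) - 1) * (n:ℝ)^2 := by ring
  -- key inequality
  have hkey : mu * ((s:ℝ) * ((n:ℝ) - s)) ≤ (n:ℝ) * ((s:ℝ) * ((s:ℝ) - 1)) := by
    rcases eq_or_lt_of_le hmu0 with h0 | hpos
    · rw [← h0]
      have h1 : (0:ℝ) ≤ (s:ℝ) - 1 := by
        have : (1:ℝ) ≤ (s:ℝ) := by exact_mod_cast hs1
        linarith
      have hn0 : (0:ℝ) ≤ (n:ℝ) := Nat.cast_nonneg n
      have hs0 : (0:ℝ) ≤ (s:ℝ) := Nat.cast_nonneg s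
      rw [zero_mul]
      exact mul_nonneg hn0 (mul_nonneg hs0 h1)
    · have hsp := spectral_key L hL (SimpleGraph.lapMatrix_mulVec_const_eq_zero G)
        mu hpos i₀ hge x hxsum
      rw [hxsq] at hsp
      have hn0 : (0:ℝ) < (n:ℝ) := by exact_mod_cast hn1
      have h7 := le_trans hsp hQbound
      have h8 : mu * ((s:ℝ) * ((n:ℝ) - s)) * n ≤ (n:ℝ) * ((s:ℝ) * ((s:ℝ) - 1)) * n := by
        nlinarith [h7]
      exact le_of_mul_le_mul_right h8 hn0
  -- algebra to the final bound
  have hnmu : (0:ℝ) < (n:ℝ) + mu := by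
    have : (1:ℝ) ≤ (n:ℝ) := by exact_mod_cast hn1
    linarith
  have hfinal : (n : ℝ) * (mu + 1) / ((n : ℝ) + mu) ≤ (s : ℝ) := by
    rw [div_le_iff₀ hnmu]
    have hs0 : (0:ℝ) < (s:ℝ) := by exact_mod_cast hs1
    nlinarith [hkey, hs0]
  have := Int.ceil_le.mpr (by push_cast; exact hfinal :
    (n : ℝ) * (mu + 1) / ((n : ℝ) + mu) ≤ ((s : ℤ) : ℝ))
  exact this
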